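/- Let (g, ∗) be a finite-dimensional left-symmetric algebra with a right identity e (so x∗e = x for all x ∈ g). Then e is also a right identity for the induced left-symmetric product on the symplectic Lie algebra g ⊕ g*: for every v ∈ g*, v∗e = v. Consequently g ⊕ g* is a Frobenius Lie algebra. -/
import Mathlib


/-- If a left-symmetric algebra `(g,∗)` has a right identity `e`, then `e` is
also a right identity for the induced left-symmetric product on the symplectic
double `g ⊕ g*` (in particular `v∗e = v` for `v ∈ g*`), and consequently
`g ⊕ g*` is a Frobenius Lie algebra (its symplectic form is exact). -/
theorem lsa_right_identity_double_frobenius {F : Type*} [Field F] {g : Type*}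
    [AddCommGroup g] [Module F g] [FiniteDimensional F g]
    (mul : g →ₗ[F] g →ₗ[F] g)
    (hls : ∀ x y z : g, mul (mul x y) z - mul x (mul y z)
        = mul (mul y x) z - mul y (mul x z))
    (e : g) (he : ∀ x : g, mul x e = x)
    (br : (g × Module.Dual F g) → (g × Module.Dual F g) → (g × Module.Dual F g))
    (hbr : ∀ a b, br a b = (mul a.1 b.1 - mul b.1 a.1,
        - (b.2 ∘ₗ mul a.1) + (a.2 ∘ₗ mul b.1)))
    (ω : (g × Module.Dual F g) → (g × Module.Dual F g) → F)
    (hω : ∀ a b, ω a b = b.2 a.1 - a.2 b.1)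
    (star : (g × Module.Dual F g) → (g × Module.Dual F g) → (g × Module.Dual F g))
    (hstar : ∀ a b c, ω a (star b c) = ω (br a b) c) :
    (∀ v : Module.Dual F g, star (0, v) (e, 0) = (0, v))
      ∧ ∃ f : Module.Dual F (g × Module.Dual F g), ∀ a b, ω a b = f (br a b) := by
  constructor
  · intro v
    set s := star (0, v) (e, 0) with hs
    have key : ∀ a : g × Module.Dual F g, ω a s = v a.1 := by
      intro a
      rw [hs, hstar, hω, hbr]
      simp [he]
    have h2 : s.2 = v := by
      ext x
      have := key (x, 0)
      rw [hω] at this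
      simpa using this
    have h1 : s.1 = 0 := by
      rw [← Module.forall_dual_apply_eq_zero_iff F]
      intro u
      have := key (0, u)
      rw [hω] at this
      simpa using this
    rw [hs] at h1 h2 ⊢
    exact Prod.ext h1 h2
  · refine ⟨-(LinearMap.applyₗ e ∘ₗ LinearMap.snd F g (Module.Dual F g)), ?_⟩
    intro a b
    rw [hω, hbr]
    simp [he]
    ring
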